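/- Let R > 0 and let f : ℝ → ℂ be continuous with support contained in [-R, R]; let g : ℝ → ℂ be integrable. Let L > 2R and suppose |g| is nondecreasing on (−∞, −L/2 + R] and nonincreasing on [L/2 − R, ∞). Define h(x) := (f *_L g)(x) − (f * g)(x), where (f * g)(x) = ∫_ℝ f(y) g(x−y) dy is ordinary convolution. Set M := R · sup|f|. Then for x ∈ [-L/2 + R, L/2 − R], h(x) = 0; for x ∈ [-L/2, −L/2 + R), |h(x)| ≤ M(|g(−L/2)| + |g(L/2 − R)|); and for x ∈ (L/2 − R, L/2], |h(x)| ≤ M(|g(L/2)| + |g(−L/2 + R)|). (Lemma A.2.) -/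

import Mathlib

open MeasureTheory

/-- The periodic restriction `u^{(L)}` of `u : ℝ → ℂ`: the `L`-periodic function
coinciding with `u` on `[-L/2, L/2)`. -/
noncomputable def periodicRestrict (L : ℝ) (u : ℝ → ℂ) (x : ℝ) : ℂ :=
  u (x - L * ⌊x / L + 1 / 2⌋)

lemma pr_eq_self {L : ℝ} (hL : 0 < L) (u : ℝ → ℂ) {t : ℝ} (h1 : -L / 2 ≤ t) (h2 : t < L / 2) :
    periodicRestrict L u t = u t := by
  unfold periodicRestrict
  have hfl : ⌊t / L + 1 / 2⌋ = (0 : ℤ) := by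
    rw [Int.floor_eq_iff]
    constructor
    · have : -(1 : ℝ) / 2 ≤ t / L := by rw [div_le_div_iff₀ (by norm_num) hL]; linarith
      push_cast; linarith
    · have : t / L < 1 / 2 := by rw [div_lt_div_iff₀ hL (by norm_num)]; linarith
      push_cast; linarith
  rw [hfl]; norm_num

lemma pr_eq_add {L : ℝ} (hL : 0 < L) (u : ℝ → ℂ) {t : ℝ} (h1 : -(3 * L) / 2 ≤ t)
    (h2 : t < -L / 2) : periodicRestrict L u t = u (t + L) := by
  unfold periodicRestrict
  have hfl : ⌊t / L + 1 / 2⌋ = (-1 : ℤ) := by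
    rw [Int.floor_eq_iff]
    constructor
    · have : -(3 : ℝ) / 2 ≤ t / L := by rw [div_le_div_iff₀ (by norm_num) hL]; linarith
      push_cast; linarith
    · have : t / L < -1 / 2 := by rw [div_lt_div_iff₀ hL (by norm_num)]; linarith
      push_cast; linarith
  rw [hfl]
  push_cast
  ring_nf

lemma pr_eq_sub {L : ℝ} (hL : 0 < L) (u : ℝ → ℂ) {t : ℝ} (h1 : L / 2 ≤ t)
    (h2 : t < 3 * L / 2) : periodicRestrict L u t = u (t - L) := by
  unfold periodicRestrict
  have hfl : ⌊t / L + 1 / 2⌋ = (1 : ℤ) := by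
    rw [Int.floor_eq_iff]
    constructor
    · have : (1 : ℝ) / 2 ≤ t / L := by rw [div_le_div_iff₀ (by norm_num) hL]; linarith
      push_cast; linarith
    · have : t / L < 3 / 2 := by rw [div_lt_div_iff₀ hL (by norm_num)]; linarith
      push_cast; linarith
  rw [hfl]
  push_cast
  ring_nf

/-- Lemma A.2: comparison of the torus convolution
`(f *_L g)(x) = ∫_{-L/2}^{L/2} f(y) g^{(L)}(x−y) dy` with the ordinary convolution
`(f * g)(x) = ∫_ℝ f(y) g(x−y) dy`, for `f` continuous supported in `[-R,R]`, `g`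
integrable with `|g|` nondecreasing on `(−∞, −L/2+R]` and nonincreasing on
`[L/2−R, ∞)`, and `L > 2R`. With `M = R·sup|f|`, the difference `h` vanishes on
`[-L/2+R, L/2−R]` and obeys the stated bounds near the two edges of the box. -/
theorem torus_conv_vs_line_conv (R : ℝ) (hR : 0 < R) (f g : ℝ → ℂ)
    (hf : Continuous f) (hfsupp : Function.support f ⊆ Set.Icc (-R) R)
    (hg : Integrable g) (L : ℝ) (hL : 2 * R < L)
    (hmono : MonotoneOn (fun x => ‖g x‖) (Set.Iic (-L / 2 + R)))
    (hanti : AntitoneOn (fun x => ‖g x‖) (Set.Ici (L / 2 - R)))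
    (h : ℝ → ℂ)
    (hdef : h = fun x =>
      (∫ y in Set.Ico (-L / 2) (L / 2), f y * periodicRestrict L g (x - y)) -
        ∫ y : ℝ, f y * g (x - y))
    (M : ℝ) (hM : M = R * ⨆ y : ℝ, ‖f y‖) :
    (∀ x ∈ Set.Icc (-L / 2 + R) (L / 2 - R), h x = 0) ∧
    (∀ x ∈ Set.Ico (-L / 2) (-L / 2 + R),
      ‖h x‖ ≤ M * (‖g (-L / 2)‖ + ‖g (L / 2 - R)‖)) ∧
    (∀ x ∈ Set.Ioc (L / 2 - R) (L / 2),
      ‖h x‖ ≤ M * (‖g (L / 2)‖ + ‖g (-L / 2 + R)‖)) := by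
  have hL0 : 0 < L := by linarith
  have hRL : R < L / 2 := by linarith
  -- f is bounded
  have hcs : HasCompactSupport f := by
    apply HasCompactSupport.intro (isCompact_Icc (a := -R) (b := R))
    intro x hx
    by_contra hfx
    exact hx (hfsupp hfx)
  obtain ⟨C, hC⟩ := hcs.norm.exists_bound_of_continuous hf.norm
  have hC' : ∀ y, ‖f y‖ ≤ C := fun y => by simpa using hC y
  have hbdd : BddAbove (Set.range fun y => ‖f y‖) := by
    refine ⟨C, ?_⟩
    rintro _ ⟨y, rfl⟩
    exact hC' y
  have hfle : ∀ y, ‖f y‖ ≤ ⨆ y : ℝ, ‖f y‖ := fun y => le_ciSup hbdd y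
  have hsup0 : 0 ≤ ⨆ y : ℝ, ‖f y‖ := le_trans (norm_nonneg _) (hfle 0)
  have hf0 : ∀ y : ℝ, y ∉ Set.Icc (-R) R → f y = 0 := by
    intro y hy
    by_contra hfy
    exact hy (hfsupp hfy)
  -- integrability of the translates
  have hInt : ∀ b : ℝ, Integrable (fun y => f y * g (b - y)) := by
    intro b
    exact (hg.comp_sub_left b).bdd_mul hf.aestronglyMeasurable (c := C) (Filter.Eventually.of_forall hC')
  -- the line convolution is supported in the box
  have hB : ∀ x : ℝ, (∫ y : ℝ, f y * g (x - y)) =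
      ∫ y in Set.Ico (-L / 2) (L / 2), f y * g (x - y) := by
    intro x
    symm
    apply setIntegral_eq_integral_of_forall_compl_eq_zero
    intro y hy
    have : f y = 0 := by
      apply hf0
      intro hy'
      exact hy ⟨by linarith [hy'.1], by linarith [hy'.2]⟩
    simp [this]
  refine ⟨?_, ?_, ?_⟩
  · -- interior: h = 0
    intro x hx
    rw [hdef]
    simp only
    rw [hB x, sub_eq_zero]
    apply setIntegral_congr_ae measurableSet_Ico
    have hsing : ∀ᵐ y : ℝ, y ≠ x - L / 2 := by
      rw [ae_iff]
      simpa using Real.volume_singleton (a := x - L / 2)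
    filter_upwards [hsing] with y hy hyIco
    by_cases hfy : f y = 0
    · simp [hfy]
    · have hy2 : y ∈ Set.Icc (-R) R := hfsupp hfy
      have h1 : -L / 2 ≤ x - y := by
        have := hx.1; have := hy2.2; linarith
      have h2 : x - y < L / 2 := by
        have hle : x - y ≤ L / 2 := by have := hx.2; have := hy2.1; linarith
        rcases lt_or_eq_of_le hle with h' | h'
        · exact h'
        · exact absurd (by linarith : y = x - L / 2) hy
      rw [pr_eq_self hL0 g h1 h2]
  · -- left edge
    intro x hx
    obtain ⟨hx1, hx2⟩ := hx
    rw [hdef]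
    simp only
    rw [hB x]
    have hc0 : (0 : ℝ) ≤ x + L / 2 := by linarith
    have hcR : x + L / 2 < R := by linarith
    -- split the box at x + L/2
    have hsplit : Set.Icc (-L / 2) (x + L / 2) ∪ Set.Ioo (x + L / 2) (L / 2) =
        Set.Ico (-L / 2) (L / 2) :=
      Set.Icc_union_Ioo_eq_Ico (by linarith) (by linarith)
    have hdisj : Disjoint (Set.Icc (-L / 2) (x + L / 2)) (Set.Ioo (x + L / 2) (L / 2)) := by
      apply Set.disjoint_left.mpr
      rintro y ⟨_, hy2⟩ ⟨hy3, _⟩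
      linarith
    have hper1 : ∀ y ∈ Set.Icc (-L / 2) (x + L / 2),
        f y * periodicRestrict L g (x - y) = f y * g (x - y) := by
      intro y hy
      rw [pr_eq_self hL0 g (by have := hy.2; linarith) (by have := hy.1; linarith)]
    have hper2 : ∀ y ∈ Set.Ioo (x + L / 2) (L / 2),
        f y * periodicRestrict L g (x - y) = f y * g (x - y + L) := by
      intro y hy
      rw [pr_eq_add hL0 g (by have := hy.2; linarith) (by have := hy.1; linarith)]
    have hI1 : Integrable (fun y => f y * g (x - y)) := hInt x
    have hI2 : Integrable (fun y => f y * g (x - y + L)) := by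
      have heq : (fun y => f y * g (x - y + L)) = fun y => f y * g ((x + L) - y) := by
        funext y
        have : x - y + L = (x + L) - y := by ring
        rw [this]
      rw [heq]
      exact hInt (x + L)
    have hA : (∫ y in Set.Ico (-L / 2) (L / 2), f y * periodicRestrict L g (x - y)) =
        (∫ y in Set.Icc (-L / 2) (x + L / 2), f y * g (x - y)) +
          ∫ y in Set.Ioo (x + L / 2) (L / 2), f y * g (x - y + L) := by
      rw [← hsplit, setIntegral_union hdisj measurableSet_Ioo
        (hI1.integrableOn.congr_fun (fun y hy => (hper1 y hy).symm) measurableSet_Icc)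
        (hI2.integrableOn.congr_fun (fun y hy => (hper2 y hy).symm) measurableSet_Ioo),
        setIntegral_congr_fun measurableSet_Icc hper1,
        setIntegral_congr_fun measurableSet_Ioo hper2]
    have hBsplit : (∫ y in Set.Ico (-L / 2) (L / 2), f y * g (x - y)) =
        (∫ y in Set.Icc (-L / 2) (x + L / 2), f y * g (x - y)) +
          ∫ y in Set.Ioo (x + L / 2) (L / 2), f y * g (x - y) := by
      rw [← hsplit, setIntegral_union hdisj measurableSet_Ioo hI1.integrableOn hI1.integrableOn]
    rw [hA, hBsplit]
    have hkey : (∫ y in Set.Icc (-L / 2) (x + L / 2), f y * g (x - y)) +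
          (∫ y in Set.Ioo (x + L / 2) (L / 2), f y * g (x - y + L)) -
          ((∫ y in Set.Icc (-L / 2) (x + L / 2), f y * g (x - y)) +
            ∫ y in Set.Ioo (x + L / 2) (L / 2), f y * g (x - y)) =
        ∫ y in Set.Ioo (x + L / 2) (L / 2),
          (f y * g (x - y + L) - f y * g (x - y)) := by
      rw [integral_sub hI2.integrableOn hI1.integrableOn]
      ring
    rw [hkey]
    -- restrict to Ioc (x + L/2) R
    have hsplit2 : Set.Ioc (x + L / 2) R ∪ Set.Ioo R (L / 2) = Set.Ioo (x + L / 2) (L / 2) :=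
      Set.Ioc_union_Ioo_eq_Ioo (le_of_lt hcR) hRL
    have hdisj2 : Disjoint (Set.Ioc (x + L / 2) R) (Set.Ioo R (L / 2)) := by
      apply Set.disjoint_left.mpr
      rintro y ⟨_, hy2⟩ ⟨hy3, _⟩
      linarith
    have hzero : (∫ y in Set.Ioo R (L / 2), (f y * g (x - y + L) - f y * g (x - y))) = 0 := by
      rw [setIntegral_congr_fun measurableSet_Ioo
        (g := fun _ => (0 : ℂ)) (fun y hy => ?_), integral_zero]
      have : f y = 0 := hf0 y (fun hy' => by have := hy'.2; have := hy.1; linarith)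
      simp [this]
    have hFF : Integrable (fun y => f y * g (x - y + L) - f y * g (x - y)) := hI2.sub hI1
    have hrestr : (∫ y in Set.Ioo (x + L / 2) (L / 2),
          (f y * g (x - y + L) - f y * g (x - y))) =
        ∫ y in Set.Ioc (x + L / 2) R, (f y * g (x - y + L) - f y * g (x - y)) := by
      rw [← hsplit2, setIntegral_union hdisj2 measurableSet_Ioo
        hFF.integrableOn hFF.integrableOn, hzero, add_zero]
    rw [hrestr]
    -- bound the integral
    have hvol : volume (Set.Ioc (x + L / 2) R) < ⊤ := by
      rw [Real.volume_Ioc]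
      exact ENNReal.ofReal_lt_top
    have hnorm := norm_setIntegral_le_of_norm_le_const (μ := volume)
      (f := fun y => f y * g (x - y + L) - f y * g (x - y))
      (C := (⨆ y : ℝ, ‖f y‖) * (‖g (-L / 2)‖ + ‖g (L / 2 - R)‖))
      hvol ?_
    · refine le_trans hnorm ?_
      rw [measureReal_def, Real.volume_Ioc, ENNReal.toReal_ofReal (by linarith)]
      rw [hM]
      have hn : (0 : ℝ) ≤ ‖g (-L / 2)‖ + ‖g (L / 2 - R)‖ :=
        add_nonneg (norm_nonneg _) (norm_nonneg _)
      nlinarith [mul_nonneg hsup0 hn]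
    · intro y hy
      obtain ⟨hy1, hy2⟩ := hy
      have hb1 : ‖g (x - y)‖ ≤ ‖g (-L / 2)‖ := by
        have hmem1 : x - y ∈ Set.Iic (-L / 2 + R) := by
          simp only [Set.mem_Iic]; linarith
        have hmem2 : (-L / 2 : ℝ) ∈ Set.Iic (-L / 2 + R) := by
          simp only [Set.mem_Iic]; linarith
        exact hmono hmem1 hmem2 (by linarith)
      have hb2 : ‖g (x - y + L)‖ ≤ ‖g (L / 2 - R)‖ := by
        have hmem1 : (L / 2 - R : ℝ) ∈ Set.Ici (L / 2 - R) := Set.self_mem_Ici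
        have hmem2 : x - y + L ∈ Set.Ici (L / 2 - R) := by
          simp only [Set.mem_Ici]; linarith
        exact hanti hmem1 hmem2 (by linarith)
      calc ‖f y * g (x - y + L) - f y * g (x - y)‖
          = ‖f y‖ * ‖g (x - y + L) - g (x - y)‖ := by
            rw [← mul_sub, norm_mul]
        _ ≤ ‖f y‖ * (‖g (x - y)‖ + ‖g (x - y + L)‖) := by
            apply mul_le_mul_of_nonneg_left _ (norm_nonneg _)
            refine le_trans (norm_sub_le _ _) ?_
            linarith
        _ ≤ (⨆ y : ℝ, ‖f y‖) * (‖g (-L / 2)‖ + ‖g (L / 2 - R)‖) := by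
            apply mul_le_mul (hfle y) (by linarith)
              (add_nonneg (norm_nonneg _) (norm_nonneg _)) hsup0
  · -- right edge
    intro x hx
    obtain ⟨hx1, hx2⟩ := hx
    rw [hdef]
    simp only
    rw [hB x]
    have hc0 : x - L / 2 ≤ 0 := by linarith
    have hcR : -R < x - L / 2 := by linarith
    have hsplit : Set.Icc (-L / 2) (x - L / 2) ∪ Set.Ioo (x - L / 2) (L / 2) =
        Set.Ico (-L / 2) (L / 2) :=
      Set.Icc_union_Ioo_eq_Ico (by linarith) (by linarith)
    have hdisj : Disjoint (Set.Icc (-L / 2) (x - L / 2)) (Set.Ioo (x - L / 2) (L / 2)) := by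
      apply Set.disjoint_left.mpr
      rintro y ⟨_, hy2⟩ ⟨hy3, _⟩
      linarith
    have hper1 : ∀ y ∈ Set.Icc (-L / 2) (x - L / 2),
        f y * periodicRestrict L g (x - y) = f y * g (x - y - L) := by
      intro y hy
      rw [pr_eq_sub hL0 g (by have := hy.2; linarith) (by have := hy.1; linarith)]
    have hper2 : ∀ y ∈ Set.Ioo (x - L / 2) (L / 2),
        f y * periodicRestrict L g (x - y) = f y * g (x - y) := by
      intro y hy
      rw [pr_eq_self hL0 g (by have := hy.2; linarith) (by have := hy.1; linarith)]
    have hI1 : Integrable (fun y => f y * g (x - y)) := hInt x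
    have hI2 : Integrable (fun y => f y * g (x - y - L)) := by
      have heq : (fun y => f y * g (x - y - L)) = fun y => f y * g ((x - L) - y) := by
        funext y
        have : x - y - L = (x - L) - y := by ring
        rw [this]
      rw [heq]
      exact hInt (x - L)
    have hA : (∫ y in Set.Ico (-L / 2) (L / 2), f y * periodicRestrict L g (x - y)) =
        (∫ y in Set.Icc (-L / 2) (x - L / 2), f y * g (x - y - L)) +
          ∫ y in Set.Ioo (x - L / 2) (L / 2), f y * g (x - y) := by
      rw [← hsplit, setIntegral_union hdisj measurableSet_Ioo
        (hI2.integrableOn.congr_fun (fun y hy => (hper1 y hy).symm) measurableSet_Icc)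
        (hI1.integrableOn.congr_fun (fun y hy => (hper2 y hy).symm) measurableSet_Ioo),
        setIntegral_congr_fun measurableSet_Icc hper1,
        setIntegral_congr_fun measurableSet_Ioo hper2]
    have hBsplit : (∫ y in Set.Ico (-L / 2) (L / 2), f y * g (x - y)) =
        (∫ y in Set.Icc (-L / 2) (x - L / 2), f y * g (x - y)) +
          ∫ y in Set.Ioo (x - L / 2) (L / 2), f y * g (x - y) := by
      rw [← hsplit, setIntegral_union hdisj measurableSet_Ioo hI1.integrableOn hI1.integrableOn]
    rw [hA, hBsplit]
    have hkey : (∫ y in Set.Icc (-L / 2) (x - L / 2), f y * g (x - y - L)) +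
          (∫ y in Set.Ioo (x - L / 2) (L / 2), f y * g (x - y)) -
          ((∫ y in Set.Icc (-L / 2) (x - L / 2), f y * g (x - y)) +
            ∫ y in Set.Ioo (x - L / 2) (L / 2), f y * g (x - y)) =
        ∫ y in Set.Icc (-L / 2) (x - L / 2),
          (f y * g (x - y - L) - f y * g (x - y)) := by
      rw [integral_sub hI2.integrableOn hI1.integrableOn]
      ring
    rw [hkey]
    -- restrict to Icc (-R) (x - L/2)
    have hsplit2 : Set.Ico (-L / 2) (-R) ∪ Set.Icc (-R) (x - L / 2) =
        Set.Icc (-L / 2) (x - L / 2) :=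
      Set.Ico_union_Icc_eq_Icc (by linarith) (by linarith)
    have hdisj2 : Disjoint (Set.Ico (-L / 2) (-R)) (Set.Icc (-R) (x - L / 2)) := by
      apply Set.disjoint_left.mpr
      rintro y ⟨_, hy2⟩ ⟨hy3, _⟩
      linarith
    have hzero : (∫ y in Set.Ico (-L / 2) (-R), (f y * g (x - y - L) - f y * g (x - y))) = 0 := by
      rw [setIntegral_congr_fun measurableSet_Ico
        (g := fun _ => (0 : ℂ)) (fun y hy => ?_), integral_zero]
      have : f y = 0 := hf0 y (fun hy' => by have := hy'.1; have := hy.2; linarith)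
      simp [this]
    have hFF : Integrable (fun y => f y * g (x - y - L) - f y * g (x - y)) := hI2.sub hI1
    have hrestr : (∫ y in Set.Icc (-L / 2) (x - L / 2),
          (f y * g (x - y - L) - f y * g (x - y))) =
        ∫ y in Set.Icc (-R) (x - L / 2), (f y * g (x - y - L) - f y * g (x - y)) := by
      rw [← hsplit2, setIntegral_union hdisj2 measurableSet_Icc
        hFF.integrableOn hFF.integrableOn, hzero, zero_add]
    rw [hrestr]
    have hvol : volume (Set.Icc (-R) (x - L / 2)) < ⊤ := by
      rw [Real.volume_Icc]
      exact ENNReal.ofReal_lt_top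
    have hnorm := norm_setIntegral_le_of_norm_le_const (μ := volume)
      (f := fun y => f y * g (x - y - L) - f y * g (x - y))
      (C := (⨆ y : ℝ, ‖f y‖) * (‖g (L / 2)‖ + ‖g (-L / 2 + R)‖))
      hvol ?_
    · refine le_trans hnorm ?_
      rw [measureReal_def, Real.volume_Icc, ENNReal.toReal_ofReal (by linarith)]
      rw [hM]
      have hn : (0 : ℝ) ≤ ‖g (L / 2)‖ + ‖g (-L / 2 + R)‖ :=
        add_nonneg (norm_nonneg _) (norm_nonneg _)
      nlinarith [mul_nonneg hsup0 hn]
    · intro y hy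
      obtain ⟨hy1, hy2⟩ := hy
      have hb1 : ‖g (x - y)‖ ≤ ‖g (L / 2)‖ := by
        have hmem1 : (L / 2 : ℝ) ∈ Set.Ici (L / 2 - R) := by
          simp only [Set.mem_Ici]; linarith
        have hmem2 : x - y ∈ Set.Ici (L / 2 - R) := by
          simp only [Set.mem_Ici]; linarith
        exact hanti hmem1 hmem2 (by linarith)
      have hb2 : ‖g (x - y - L)‖ ≤ ‖g (-L / 2 + R)‖ := by
        have hmem1 : x - y - L ∈ Set.Iic (-L / 2 + R) := by
          simp only [Set.mem_Iic]; linarith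
        have hmem2 : (-L / 2 + R : ℝ) ∈ Set.Iic (-L / 2 + R) := Set.self_mem_Iic
        exact hmono hmem1 hmem2 (by linarith)
      calc ‖f y * g (x - y - L) - f y * g (x - y)‖
          = ‖f y‖ * ‖g (x - y - L) - g (x - y)‖ := by
            rw [← mul_sub, norm_mul]
        _ ≤ ‖f y‖ * (‖g (x - y)‖ + ‖g (x - y - L)‖) := by
            apply mul_le_mul_of_nonneg_left _ (norm_nonneg _)
            refine le_trans (norm_sub_le _ _) ?_
            linarith
        _ ≤ (⨆ y : ℝ, ‖f y‖) * (‖g (L / 2)‖ + ‖g (-L / 2 + R)‖) := by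
            apply mul_le_mul (hfle y) (by linarith)
              (add_nonneg (norm_nonneg _) (norm_nonneg _)) hsup0
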